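/- Let (Ω, F, P) be a probability space, let τ ≤ t be natural numbers, and for each u with τ ≤ u ≤ t let 𝒜(τ,u) and 𝒮(u,t) be random variables taking values in (0,∞) such that 𝒜(τ,u) and 𝒮(u,t) are independent. Let D(τ,t) be a real-valued random variable satisfying almost surely e^{D(τ,t)} ≥ min_{τ≤u≤t} 𝒜(τ,u)·𝒮(u,t). Then for every real s < 1 and every real d ≥ 0, P( D(τ,t) ≤ d ) ≤ e^{(1−s)d} · Σ_{u=τ}^{t} E[𝒜(τ,u)^{s−1}] · E[𝒮(u,t)^{s−1}], where the right-hand side is allowed to be +∞. -/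

import Mathlib

open MeasureTheory ProbabilityTheory

/-- Probabilistic lower bound on departures in the (min,×) network calculus: if a.s.
`e^{D(τ,t)} ≥ min_{τ≤u≤t} 𝒜(τ,u)·𝒮(u,t)` for independent positive SNR arrival and
service processes, then for every `s < 1` and `d ≥ 0`,
`P(D(τ,t) ≤ d) ≤ e^{(1−s)d} · Σ_{u=τ}^t E[𝒜(τ,u)^{s−1}]·E[𝒮(u,t)^{s−1}]`. -/
theorem departures_lower_tail_mellin_bound
    {Ω : Type*} [MeasureSpace Ω] [IsProbabilityMeasure (ℙ : Measure Ω)]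
    (A S : ℕ → ℕ → Ω → ℝ) (τ t : ℕ) (hτt : τ ≤ t)
    (hmeasA : ∀ u, τ ≤ u → u ≤ t → Measurable (A τ u))
    (hmeasS : ∀ u, τ ≤ u → u ≤ t → Measurable (S u t))
    (hposA : ∀ u, τ ≤ u → u ≤ t → ∀ ω, 0 < A τ u ω)
    (hposS : ∀ u, τ ≤ u → u ≤ t → ∀ ω, 0 < S u t ω)
    (hindep : ∀ u, τ ≤ u → u ≤ t → IndepFun (A τ u) (S u t) ℙ)
    (D : Ω → ℝ) (hDmeas : Measurable D)
    (hD : ∀ᵐ ω ∂ℙ, (Finset.Icc τ t).inf' (Finset.nonempty_Icc.mpr hτt)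
        (fun u => A τ u ω * S u t ω) ≤ Real.exp (D ω))
    (s : ℝ) (hs : s < 1) (d : ℝ) (hd : 0 ≤ d) :
    ℙ {ω | D ω ≤ d} ≤
      ENNReal.ofReal (Real.exp ((1 - s) * d)) *
        ∑ u ∈ Finset.Icc τ t,
          (∫⁻ ω, ENNReal.ofReal (A τ u ω ^ (s - 1)) ∂ℙ) *
          (∫⁻ ω, ENNReal.ofReal (S u t ω ^ (s - 1)) ∂ℙ) := by
  classical
  set c : ENNReal := ENNReal.ofReal (Real.exp ((1 - s) * d)) with hc
  set E : ℕ → Set Ω := fun u => {ω | A τ u ω * S u t ω ≤ Real.exp d} with hE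
  -- Step 1: union bound
  have hsub : ℙ {ω | D ω ≤ d} ≤ ℙ (⋃ u ∈ Finset.Icc τ t, E u) := by
    apply measure_mono_ae
    filter_upwards [hD] with ω hω hωD
    have h1 : Real.exp (D ω) ≤ Real.exp d := Real.exp_le_exp.mpr hωD
    have h2 : (Finset.Icc τ t).inf' (Finset.nonempty_Icc.mpr hτt)
        (fun u => A τ u ω * S u t ω) ≤ Real.exp d := le_trans hω h1
    obtain ⟨u, hu, hueq⟩ := Finset.exists_mem_eq_inf' (Finset.nonempty_Icc.mpr hτt)
        (fun u => A τ u ω * S u t ω)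
    exact Set.mem_biUnion hu (by simpa [hE, ← hueq] using h2)
  have hunion : ℙ (⋃ u ∈ Finset.Icc τ t, E u) ≤ ∑ u ∈ Finset.Icc τ t, ℙ (E u) :=
    measure_biUnion_finset_le _ _
  -- Step 2: Markov bound per term
  have hterm : ∀ u ∈ Finset.Icc τ t, ℙ (E u) ≤
      c * ((∫⁻ ω, ENNReal.ofReal (A τ u ω ^ (s - 1)) ∂ℙ) *
        (∫⁻ ω, ENNReal.ofReal (S u t ω ^ (s - 1)) ∂ℙ)) := by
    intro u hu
    rw [Finset.mem_Icc] at hu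
    obtain ⟨hτu, hut⟩ := hu
    have hA := hmeasA u hτu hut
    have hS := hmeasS u hτu hut
    have hApos := hposA u hτu hut
    have hSpos := hposS u hτu hut
    have hφeq : ∀ x : ℝ, 0 < x →
        ENNReal.ofReal (Real.exp (Real.log x * (s - 1))) = ENNReal.ofReal (x ^ (s - 1)) := by
      intro x hx
      rw [Real.rpow_def_of_pos hx]
    set φ : ℝ → ENNReal := fun x => ENNReal.ofReal (Real.exp (Real.log x * (s - 1))) with hφ
    have hφmeas : Measurable φ :=
      ENNReal.measurable_ofReal.comp (Real.measurable_exp.comp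
        (Real.measurable_log.mul_const _))
    set f : Ω → ENNReal := fun ω => ENNReal.ofReal ((A τ u ω * S u t ω) ^ (s - 1)) with hf
    have hfmeas : Measurable f := by
      have : f = fun ω => φ (A τ u ω * S u t ω) := by
        funext ω
        rw [hf]; exact (hφeq _ (mul_pos (hApos ω) (hSpos ω))).symm
      rw [this]; exact hφmeas.comp (hA.mul hS)
    set ε : ENNReal := ENNReal.ofReal (Real.exp ((s - 1) * d)) with hε
    have hεpos : ε ≠ 0 := by
      simp [hε, ENNReal.ofReal_eq_zero, not_le, Real.exp_pos]
    have hεtop : ε ≠ ⊤ := ENNReal.ofReal_ne_top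
    have hEsub : E u ⊆ {ω | ε ≤ f ω} := by
      intro ω hω
      have hprod : 0 < A τ u ω * S u t ω := mul_pos (hApos ω) (hSpos ω)
      have : Real.exp d ^ (s - 1) ≤ (A τ u ω * S u t ω) ^ (s - 1) :=
        Real.rpow_le_rpow_of_nonpos hprod hω (by linarith)
      have hexp : Real.exp d ^ (s - 1) = Real.exp ((s - 1) * d) := by
        rw [← Real.exp_mul, mul_comm]
      simp only [Set.mem_setOf_eq, hf, hε]
      exact ENNReal.ofReal_le_ofReal (hexp ▸ this)
    have hmarkov : ℙ (E u) ≤ (∫⁻ ω, f ω ∂ℙ) / ε :=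
      le_trans (measure_mono hEsub) (meas_ge_le_lintegral_div hfmeas.aemeasurable hεpos hεtop)
    -- factor the lintegral via independence
    have hsplit : (∫⁻ ω, f ω ∂ℙ) =
        (∫⁻ ω, ENNReal.ofReal (A τ u ω ^ (s - 1)) ∂ℙ) *
        (∫⁻ ω, ENNReal.ofReal (S u t ω ^ (s - 1)) ∂ℙ) := by
      have heq : ∀ ω, f ω =
          ENNReal.ofReal (A τ u ω ^ (s - 1)) * ENNReal.ofReal (S u t ω ^ (s - 1)) := by
        intro ω
        rw [hf]
        simp only
        rw [Real.mul_rpow (hApos ω).le (hSpos ω).le,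
          ENNReal.ofReal_mul (Real.rpow_nonneg (hApos ω).le _)]
      rw [funext heq]
      have hAeq : ∀ ω, ENNReal.ofReal (A τ u ω ^ (s - 1)) = φ (A τ u ω) :=
        fun ω => (hφeq _ (hApos ω)).symm
      have hSeq : ∀ ω, ENNReal.ofReal (S u t ω ^ (s - 1)) = φ (S u t ω) :=
        fun ω => (hφeq _ (hSpos ω)).symm
      simp only [hAeq, hSeq]
      exact ProbabilityTheory.lintegral_mul_eq_lintegral_mul_lintegral_of_indepFun''
        (hφmeas.comp hA).aemeasurable (hφmeas.comp hS).aemeasurable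
        ((hindep u hτu hut).comp hφmeas hφmeas)
    calc ℙ (E u) ≤ (∫⁻ ω, f ω ∂ℙ) / ε := hmarkov
      _ = c * ((∫⁻ ω, ENNReal.ofReal (A τ u ω ^ (s - 1)) ∂ℙ) *
          (∫⁻ ω, ENNReal.ofReal (S u t ω ^ (s - 1)) ∂ℙ)) := by
        rw [hsplit, ENNReal.div_eq_inv_mul, hε, hc,
          ← ENNReal.ofReal_inv_of_pos (Real.exp_pos _), ← Real.exp_neg]
        ring_nf
    -- done
  calc ℙ {ω | D ω ≤ d} ≤ ∑ u ∈ Finset.Icc τ t, ℙ (E u) := le_trans hsub hunion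
    _ ≤ ∑ u ∈ Finset.Icc τ t, c * ((∫⁻ ω, ENNReal.ofReal (A τ u ω ^ (s - 1)) ∂ℙ) *
        (∫⁻ ω, ENNReal.ofReal (S u t ω ^ (s - 1)) ∂ℙ)) := Finset.sum_le_sum hterm
    _ = c * ∑ u ∈ Finset.Icc τ t, ((∫⁻ ω, ENNReal.ofReal (A τ u ω ^ (s - 1)) ∂ℙ) *
        (∫⁻ ω, ENNReal.ofReal (S u t ω ^ (s - 1)) ∂ℙ)) := by rw [Finset.mul_sum]
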